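/- Let $\mathcal{T}$ be an invertible matrix (or invertible operator with trace-class perturbation) with $\|\mathcal{T}^{-1}\| \le C$, and let $\mathcal{T}^\delta$ satisfy $\|\mathcal{T} - \mathcal{T}^\delta\|_{\mathrm{tr}} \le \delta \|Q\|_{\mathrm{tr}}$ with $C\delta\|Q\|_{\mathrm{tr}} \le 1/2$. Then $\big| \ln|\det \mathcal{T}^\delta| - \ln|\det \mathcal{T}| \big| \le 2C\delta \|Q\|_{\mathrm{tr}}$. -/

import Mathlib

open scoped Matrix.Norms.L2Operator

section Aux

open scoped ComplexOrder
open Matrix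

variable {n : ℕ}

/-- The `i`-th column of `M` as an element of Euclidean space. -/
noncomputable def colE (M : Matrix (Fin n) (Fin n) ℂ) (i : Fin n) : EuclideanSpace ℂ (Fin n) :=
  (WithLp.equiv 2 (Fin n → ℂ)).symm (fun j => M j i)

lemma re_diag_eq (M : Matrix (Fin n) (Fin n) ℂ) (i : Fin n) :
    ((Mᴴ * M) i i).re = ∑ j, ‖M j i‖ ^ 2 := by
  simp only [Matrix.mul_apply, Matrix.conjTranspose_apply]
  rw [Complex.re_sum]
  refine Finset.sum_congr rfl fun j _ => ?_
  simp [Complex.star_def, mul_comm, Complex.mul_conj, Complex.sq_norm, Complex.normSq_apply]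

lemma norm_colE (M : Matrix (Fin n) (Fin n) ℂ) (i : Fin n) :
    ‖colE M i‖ = Real.sqrt (((Mᴴ * M) i i).re) := by
  rw [EuclideanSpace.norm_eq, re_diag_eq]
  congr 1

lemma norm_one_le' : ‖(1 : Matrix (Fin n) (Fin n) ℂ)‖ ≤ 1 := by
  rw [Matrix.cstar_norm_def, _root_.map_one, ContinuousLinearMap.one_def]
  exact ContinuousLinearMap.norm_id_le

lemma colE_add (M N : Matrix (Fin n) (Fin n) ℂ) (i : Fin n) :
    colE (M + N) i = colE M i + colE N i := by
  simp [colE]; rfl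

lemma norm_colE_one (i : Fin n) : ‖colE (1 : Matrix (Fin n) (Fin n) ℂ) i‖ = 1 := by
  rw [norm_colE]; simp

lemma norm_colE_mul_le (Y Z : Matrix (Fin n) (Fin n) ℂ) (i : Fin n) :
    ‖colE (Y * Z) i‖ ≤ ‖Y‖ * ‖colE Z i‖ := by
  have h := Matrix.l2_opNorm_mulVec Y (colE Z i)
  have he : colE (Y * Z) i = (EuclideanSpace.equiv (Fin n) ℂ).symm (Y *ᵥ (colE Z i)) := by
    ext j
    simp [colE, Matrix.mul_apply, Matrix.mulVec, dotProduct]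
  rw [he]
  exact h

lemma sum_apply' (s : Finset (Fin n)) (f : Fin n → EuclideanSpace ℂ (Fin n)) (j : Fin n) :
    (∑ i ∈ s, f i) j = ∑ i ∈ s, f i j := by
  induction' s using Finset.induction with a s ha ih
  · rfl
  · rw [Finset.sum_insert ha, Finset.sum_insert ha, ← ih]; rfl

lemma mulVec_colE (M : Matrix (Fin n) (Fin n) ℂ) (y : EuclideanSpace ℂ (Fin n)) :
    (EuclideanSpace.equiv (Fin n) ℂ).symm (M *ᵥ y) = ∑ i, y i • colE M i := by
  ext j
  rw [sum_apply']
  simp [colE, Matrix.mulVec, dotProduct, mul_comm]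

lemma amgm_aux (f : Fin n → ℝ) (h0 : ∀ i, 0 ≤ f i) (hsum : ∑ i, f i = n) :
    ∏ i, f i ≤ 1 := by
  rcases Nat.eq_zero_or_pos n with hn | hn
  · subst hn; simp
  have hn' : (0:ℝ) < n := by exact_mod_cast hn
  have key := Real.geom_mean_le_arith_mean_weighted Finset.univ (fun _ => (n:ℝ)⁻¹) f
    (fun i _ => by positivity) (by simp [Finset.card_univ]; field_simp) (fun i _ => h0 i)
  have h2 : ∑ i, (n:ℝ)⁻¹ * f i = 1 := by
    rw [← Finset.mul_sum, hsum]; field_simp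
  rw [h2] at key
  have h3 : ∏ i, f i ^ ((n:ℝ)⁻¹) = (∏ i, f i) ^ ((n:ℝ)⁻¹) := by
    rw [← Real.finset_prod_rpow _ _ (fun i _ => h0 i)]
  rw [h3] at key
  have h4 : (0:ℝ) ≤ ∏ i, f i := Finset.prod_nonneg (fun i _ => h0 i)
  calc ∏ i, f i = ((∏ i, f i) ^ ((n:ℝ)⁻¹)) ^ (n:ℝ) := by
        rw [← Real.rpow_mul h4, inv_mul_cancel₀ (ne_of_gt hn'), Real.rpow_one]
    _ ≤ 1 ^ (n:ℝ) := Real.rpow_le_rpow (Real.rpow_nonneg h4 _) key (le_of_lt hn')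
    _ = 1 := Real.one_rpow _

lemma trace_formula (N : Matrix (Fin n) (Fin n) ℂ) :
    ∑ i, (isHermitian_conjTranspose_mul_self N).eigenvalues i = ∑ i, ((Nᴴ * N) i i).re := by
  set h := isHermitian_conjTranspose_mul_self N
  have htr : (Nᴴ * N).trace = ∑ i, ((h.eigenvalues i : ℂ)) := by
    conv_lhs => rw [h.spectral_theorem]
    rw [Unitary.conjStarAlgAut_apply, Matrix.trace_mul_comm, ← mul_assoc, Unitary.coe_star_mul_self, one_mul,
      Matrix.trace_diagonal]
    simp
  have h2 : ((Nᴴ * N).trace).re = ∑ i, h.eigenvalues i := by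
    rw [htr, Complex.re_sum]; simp
  rw [← h2, Matrix.trace, Complex.re_sum]
  rfl

lemma sq_abs_det_eq (N : Matrix (Fin n) (Fin n) ℂ) :
    (‖N.det‖)^2 = ∏ i, (isHermitian_conjTranspose_mul_self N).eigenvalues i := by
  set h := isHermitian_conjTranspose_mul_self N
  have hdet : (Nᴴ * N).det = ∏ i, ((h.eigenvalues i : ℂ)) := h.det_eq_prod_eigenvalues
  rw [Matrix.det_mul, Matrix.det_conjTranspose] at hdet
  have : ((‖N.det‖ ^ 2 : ℝ) : ℂ) = ((∏ i, h.eigenvalues i : ℝ) : ℂ) := by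
    rw [Complex.ofReal_prod, ← hdet, ← Complex.normSq_eq_norm_sq, Complex.star_def, mul_comm,
      Complex.mul_conj]
  exact_mod_cast this

lemma abs_det_le_one (N : Matrix (Fin n) (Fin n) ℂ) (hcol : ∀ i, ((Nᴴ * N) i i).re = 1) :
    ‖N.det‖ ≤ 1 := by
  have h1 : (‖N.det‖)^2 ≤ 1 := by
    rw [sq_abs_det_eq]
    apply amgm_aux _ (fun i => (posSemidef_conjTranspose_mul_self N).eigenvalues_nonneg i)
    rw [trace_formula]
    simp [hcol]
  nlinarith [norm_nonneg N.det]

/-- Hadamard's inequality: `|det M|` is at most the product of column norms. -/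
lemma abs_det_le_prod_colE (M : Matrix (Fin n) (Fin n) ℂ) :
    ‖M.det‖ ≤ ∏ i, ‖colE M i‖ := by
  by_cases hz : ∃ i, ∀ j, M j i = 0
  · obtain ⟨i, hi⟩ := hz
    rw [Matrix.det_eq_zero_of_column_eq_zero i hi]
    simp only [norm_zero]
    exact Finset.prod_nonneg (fun i _ => norm_nonneg _)
  push_neg at hz
  set g : Fin n → ℝ := fun i => ((Mᴴ * M) i i).re with hg
  have hgpos : ∀ i, 0 < g i := by
    intro i
    obtain ⟨j, hj⟩ := hz i
    rw [hg]
    simp only [re_diag_eq]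
    apply Finset.sum_pos' (fun k _ => by positivity)
    exact ⟨j, Finset.mem_univ j, by have := norm_pos_iff.mpr hj; positivity⟩
  set c : Fin n → ℝ := fun i => Real.sqrt (g i) with hc
  have hcpos : ∀ i, 0 < c i := fun i => Real.sqrt_pos.mpr (hgpos i)
  set N := M * Matrix.diagonal (fun i => ((c i)⁻¹ : ℂ)) with hN
  have hNapp : ∀ j i, N j i = M j i * ((c i)⁻¹ : ℂ) := by
    intro j i; rw [hN, Matrix.mul_diagonal]
  have hNcol : ∀ i, ((Nᴴ * N) i i).re = 1 := by
    intro i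
    rw [re_diag_eq]
    have : ∀ j, ‖N j i‖ ^ 2 = ‖M j i‖ ^ 2 * ((c i)⁻¹)^2 := by
      intro j
      rw [hNapp, norm_mul, mul_pow]
      congr 1
      rw [norm_inv, Complex.norm_real, Real.norm_of_nonneg (le_of_lt (hcpos i))]
    simp only [this]
    rw [← Finset.sum_mul, ← re_diag_eq]
    show g i * (c i)⁻¹ ^ 2 = 1
    have hci : (c i)^2 = g i := Real.sq_sqrt (le_of_lt (hgpos i))
    rw [inv_pow, hci, mul_inv_cancel₀ (ne_of_gt (hgpos i))]
  have hdet1 : ‖N.det‖ ≤ 1 := abs_det_le_one N hNcol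
  have hNdet : N.det = M.det * ∏ i, ((c i)⁻¹ : ℂ) := by
    rw [hN, Matrix.det_mul, Matrix.det_diagonal]
  have hMdet : M.det = N.det * ∏ i, ((c i) : ℂ) := by
    rw [hNdet, mul_assoc, ← Finset.prod_mul_distrib]
    have : ∀ i ∈ Finset.univ, ((c i)⁻¹ : ℂ) * (c i : ℂ) = 1 := by
      intro i _
      rw [inv_mul_cancel₀]
      exact_mod_cast (ne_of_gt (hcpos i))
    rw [Finset.prod_congr rfl this]
    simp
  calc ‖M.det‖ = ‖N.det‖ * ∏ i, c i := by
        rw [hMdet, norm_mul]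
        congr 1
        rw [← Complex.ofReal_prod, Complex.norm_real,
          Real.norm_of_nonneg (le_of_lt (Finset.prod_pos (fun i _ => hcpos i)))]
    _ ≤ 1 * ∏ i, c i :=
        mul_le_mul_of_nonneg_right hdet1 (le_of_lt (Finset.prod_pos (fun i _ => hcpos i)))
    _ = ∏ i, ‖colE M i‖ := by
        rw [one_mul]
        exact Finset.prod_congr rfl (fun i _ => (norm_colE M i).symm)

end Aux

/-- The trace (nuclear) norm of a square complex matrix. -/
noncomputable def traceNorm {n : ℕ} (A : Matrix (Fin n) (Fin n) ℂ) : ℝ :=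
  ∑ i, Real.sqrt ((Matrix.isHermitian_conjTranspose_mul_self A).eigenvalues i)

section Aux2

open scoped ComplexOrder
open Matrix

variable {n : ℕ}

lemma traceNorm_nonneg (A : Matrix (Fin n) (Fin n) ℂ) : 0 ≤ traceNorm A :=
  Finset.sum_nonneg fun i _ => Real.sqrt_nonneg _

lemma norm_colE_spec (F : Matrix (Fin n) (Fin n) ℂ) (i : Fin n) :
    ‖colE (F * ((Matrix.isHermitian_conjTranspose_mul_self F).eigenvectorUnitary : Matrix (Fin n) (Fin n) ℂ)) i‖
      = Real.sqrt ((Matrix.isHermitian_conjTranspose_mul_self F).eigenvalues i) := by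
  set h := Matrix.isHermitian_conjTranspose_mul_self F
  set V : Matrix (Fin n) (Fin n) ℂ := (h.eigenvectorUnitary : Matrix (Fin n) (Fin n) ℂ) with hV
  rw [norm_colE]
  congr 1
  have key : (F * V)ᴴ * (F * V) = Matrix.diagonal (RCLike.ofReal ∘ h.eigenvalues) := by
    rw [Matrix.conjTranspose_mul]
    calc Vᴴ * Fᴴ * (F * V) = (star V) * (Fᴴ * F) * V := by
          rw [Matrix.star_eq_conjTranspose]; noncomm_ring
      _ = Matrix.diagonal (RCLike.ofReal ∘ h.eigenvalues) :=
          (Unitary.conjStarAlgAut_star_apply (S := ℂ) _ _).symm.trans h.conjStarAlgAut_star_eigenvectorUnitary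
  rw [key]
  simp

lemma norm_unitary_le (F : Matrix (Fin n) (Fin n) ℂ) :
    ‖((Matrix.isHermitian_conjTranspose_mul_self F).eigenvectorUnitary : Matrix (Fin n) (Fin n) ℂ)‖ ≤ 1
      ∧ ‖star ((Matrix.isHermitian_conjTranspose_mul_self F).eigenvectorUnitary : Matrix (Fin n) (Fin n) ℂ)‖ ≤ 1 := by
  set V : Matrix (Fin n) (Fin n) ℂ :=
    ((Matrix.isHermitian_conjTranspose_mul_self F).eigenvectorUnitary : Matrix (Fin n) (Fin n) ℂ) with hV
  have h1 : ‖V‖ * ‖V‖ = ‖Vᴴ * V‖ := (Matrix.l2_opNorm_conjTranspose_mul_self V).symm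
  have h2 : Vᴴ * V = 1 := by
    rw [← Matrix.star_eq_conjTranspose]
    exact Unitary.coe_star_mul_self _
  rw [h2] at h1
  have h3 : ‖V‖ ≤ 1 := by nlinarith [norm_nonneg V, norm_one_le' (n := n)]
  refine ⟨h3, ?_⟩
  rw [Matrix.star_eq_conjTranspose, Matrix.l2_opNorm_conjTranspose]
  exact h3

/-- The workhorse: `|det (1 + X F)| ≤ exp (c ‖F‖_tr)` when `‖X‖ ≤ c`. -/
lemma abs_det_one_add_le (X F : Matrix (Fin n) (Fin n) ℂ) (c : ℝ) (hX : ‖X‖ ≤ c) :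
    ‖(1 + X * F).det‖ ≤ Real.exp (c * traceNorm F) := by
  have hc0 : 0 ≤ c := le_trans (norm_nonneg X) hX
  set h := Matrix.isHermitian_conjTranspose_mul_self F
  set V : Matrix (Fin n) (Fin n) ℂ := (h.eigenvectorUnitary : Matrix (Fin n) (Fin n) ℂ) with hV
  set d : Fin n → ℝ := fun i => Real.sqrt (h.eigenvalues i) with hd
  have hd0 : ∀ i, 0 ≤ d i := fun i => Real.sqrt_nonneg _
  have hVsV : star V * V = 1 := Unitary.coe_star_mul_self _
  set B : Matrix (Fin n) (Fin n) ℂ := star V * (1 + X * F) * V with hB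
  have hBdet : B.det = (1 + X * F).det := by
    have h1 : (star V).det * V.det = 1 := by rw [← Matrix.det_mul, hVsV, Matrix.det_one]
    calc B.det = (1 + X * F).det * ((star V).det * V.det) := by
          rw [hB, Matrix.det_mul, Matrix.det_mul]; ring
      _ = (1 + X * F).det := by rw [h1, mul_one]
  have hB2 : B = 1 + (star V * X) * (F * V) := by
    have e1 : star V * (1 + X * F) * V = star V * V + star V * X * (F * V) := by noncomm_ring
    rw [hB, e1, hVsV]
  have hcol : ∀ i, ‖colE B i‖ ≤ 1 + c * d i := by
    intro i
    rw [hB2]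
    calc ‖colE (1 + (star V * X) * (F * V)) i‖
        ≤ ‖colE (1 : Matrix (Fin n) (Fin n) ℂ) i‖ + ‖colE ((star V * X) * (F * V)) i‖ := by
          rw [colE_add]; exact norm_add_le _ _
      _ ≤ 1 + ‖star V * X‖ * ‖colE (F * V) i‖ := by
          rw [norm_colE_one]
          exact add_le_add le_rfl (norm_colE_mul_le _ _ i)
      _ ≤ 1 + c * d i := by
          have h1 : ‖star V * X‖ ≤ c :=
            le_trans (Matrix.l2_opNorm_mul _ _)
              (by
                have := (norm_unitary_le F).2
                calc ‖star V‖ * ‖X‖ ≤ 1 * c :=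
                      mul_le_mul this hX (norm_nonneg _) zero_le_one
                  _ = c := one_mul c)
          have h2 : ‖colE (F * V) i‖ = d i := norm_colE_spec F i
          rw [h2]
          exact add_le_add le_rfl
            (mul_le_mul_of_nonneg_right h1 (hd0 i) |>.trans_eq rfl |>.trans (le_of_eq rfl))
  calc ‖(1 + X * F).det‖ = ‖B.det‖ := by rw [hBdet]
    _ ≤ ∏ i, ‖colE B i‖ := abs_det_le_prod_colE B
    _ ≤ ∏ i, (1 + c * d i) := Finset.prod_le_prod (fun i _ => norm_nonneg _)
        (fun i _ => hcol i)
    _ ≤ ∏ i, Real.exp (c * d i) := Finset.prod_le_prod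
        (fun i _ => by positivity) (fun i _ => by rw [add_comm]; exact Real.add_one_le_exp _)
    _ = Real.exp (∑ i, c * d i) := (Real.exp_sum _ _).symm
    _ = Real.exp (c * traceNorm F) := by rw [← Finset.mul_sum]; rfl

lemma l2_opNorm_le_traceNorm (F : Matrix (Fin n) (Fin n) ℂ) : ‖F‖ ≤ traceNorm F := by
  rw [Matrix.l2_opNorm_def]
  refine ContinuousLinearMap.opNorm_le_bound _ (traceNorm_nonneg F) fun x => ?_
  set h := Matrix.isHermitian_conjTranspose_mul_self F
  set V : Matrix (Fin n) (Fin n) ℂ := (h.eigenvectorUnitary : Matrix (Fin n) (Fin n) ℂ) with hV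
  set d : Fin n → ℝ := fun i => Real.sqrt (h.eigenvalues i) with hd
  set y : EuclideanSpace ℂ (Fin n) := (EuclideanSpace.equiv (Fin n) ℂ).symm (star V *ᵥ x) with hy
  have hynorm : ‖y‖ ≤ ‖x‖ := by
    calc ‖y‖ ≤ ‖star V‖ * ‖x‖ := Matrix.l2_opNorm_mulVec _ _
      _ ≤ 1 * ‖x‖ := mul_le_mul_of_nonneg_right (norm_unitary_le F).2 (norm_nonneg x)
      _ = ‖x‖ := one_mul _
  have hVVs : V * star V = 1 := Unitary.coe_mul_star_self _
  have hx : F *ᵥ x = (F * V) *ᵥ y := by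
    show F *ᵥ x = (F * V) *ᵥ (star V *ᵥ x)
    rw [Matrix.mulVec_mulVec, Matrix.mul_assoc, hVVs, Matrix.mul_one]
  have hcoord : ∀ i, ‖y i‖ ≤ ‖y‖ := by
    intro i
    rw [EuclideanSpace.norm_eq]
    have h1 : ‖y i‖ = Real.sqrt (‖y i‖ ^ 2) := by
      rw [Real.sqrt_sq (norm_nonneg _)]
    rw [h1]
    exact Real.sqrt_le_sqrt (Finset.single_le_sum (f := fun j => ‖y j‖ ^ 2)
      (fun j _ => by positivity) (Finset.mem_univ i))
  show ‖(EuclideanSpace.equiv (Fin n) ℂ).symm (F *ᵥ x)‖ ≤ traceNorm F * ‖x‖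
  calc ‖(EuclideanSpace.equiv (Fin n) ℂ).symm (F *ᵥ x)‖
      = ‖∑ i, y i • colE (F * V) i‖ := by rw [hx, mulVec_colE]
    _ ≤ ∑ i, ‖y i • colE (F * V) i‖ := norm_sum_le _ _
    _ = ∑ i, ‖y i‖ * d i := by
        refine Finset.sum_congr rfl fun i _ => ?_
        rw [norm_smul, norm_colE_spec F i]
    _ ≤ ∑ i, ‖y‖ * d i := Finset.sum_le_sum fun i _ =>
        mul_le_mul_of_nonneg_right (hcoord i) (Real.sqrt_nonneg _)
    _ = traceNorm F * ‖y‖ := by rw [← Finset.mul_sum, mul_comm]; rfl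
    _ ≤ traceNorm F * ‖x‖ := mul_le_mul_of_nonneg_left hynorm (traceNorm_nonneg F)

end Aux2

open Matrix in
set_option maxHeartbeats 1000000 in
theorem statement_13 {n : ℕ} (T Tδ : Matrix (Fin n) (Fin n) ℂ) (C δ Qtr : ℝ)
    (hC : 0 ≤ C) (hδ : 0 ≤ δ) (hQtr : 0 ≤ Qtr)
    (hT : IsUnit T) (hTinv : ‖T⁻¹‖ ≤ C)
    (hdiff : traceNorm (T - Tδ) ≤ δ * Qtr)
    (hsmall : C * (δ * Qtr) ≤ 1 / 2) :
    |Real.log (‖Tδ.det‖) - Real.log (‖T.det‖)| ≤ 2 * C * (δ * Qtr) := by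
  have hs0 : 0 ≤ δ * Qtr := mul_nonneg hδ hQtr
  have hCs : 0 ≤ C * (δ * Qtr) := mul_nonneg hC hs0
  set F := T - Tδ with hF
  have hTdet : IsUnit T.det := (Matrix.isUnit_iff_isUnit_det T).mp hT
  have hTT : T * T⁻¹ = 1 := Matrix.mul_nonsing_inv T hTdet
  haveI : CompleteSpace (Matrix (Fin n) (Fin n) ℂ) := FiniteDimensional.complete ℂ _
  set A := T⁻¹ * F with hA
  have hAnorm : ‖A‖ ≤ C * (δ * Qtr) := by
    calc ‖A‖ ≤ ‖T⁻¹‖ * ‖F‖ := Matrix.l2_opNorm_mul _ _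
      _ ≤ C * (δ * Qtr) :=
        mul_le_mul hTinv (le_trans (l2_opNorm_le_traceNorm F) hdiff) (norm_nonneg _) hC
  have hAhalf : ‖A‖ ≤ 1/2 := le_trans hAnorm hsmall
  have hAlt : ‖A‖ < 1 := lt_of_le_of_lt hAhalf (by norm_num)
  have hTδeq : Tδ = T * (1 - A) := by
    rw [hA, Matrix.mul_sub, Matrix.mul_one, ← Matrix.mul_assoc, hTT, Matrix.one_mul, hF,
      sub_sub_cancel]
  have hUnit1A : IsUnit (1 - A) := isUnit_one_sub_of_norm_lt_one hAlt
  have hTδunit : IsUnit Tδ := by rw [hTδeq]; exact hT.mul hUnit1A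
  have hTδdet : IsUnit Tδ.det := (Matrix.isUnit_iff_isUnit_det Tδ).mp hTδunit
  set B := (1 - A)⁻¹ with hBdef
  have h1Adet : IsUnit (1 - A).det := (Matrix.isUnit_iff_isUnit_det _).mp hUnit1A
  have hB1 : (1 - A) * B = 1 := Matrix.mul_nonsing_inv _ h1Adet
  have hBeq : B = 1 + A * B := by
    have h0 : B - A * B = 1 := by rw [← Matrix.one_mul B, ← Matrix.mul_assoc, ← Matrix.sub_mul]
                                  simpa using hB1
    rw [← h0]; noncomm_ring
  have hBnorm : ‖B‖ ≤ 2 := by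
    have h1 : ‖B‖ ≤ ‖(1 : Matrix (Fin n) (Fin n) ℂ)‖ + ‖A * B‖ := by
      conv_lhs => rw [hBeq]
      exact norm_add_le (1 : Matrix (Fin n) (Fin n) ℂ) (A * B)
    have h2 : ‖A * B‖ ≤ ‖A‖ * ‖B‖ := Matrix.l2_opNorm_mul _ _
    nlinarith [norm_nonneg B, norm_one_le' (n := n), norm_nonneg A]
  have hTδinv : Tδ⁻¹ = B * T⁻¹ := by rw [hTδeq, Matrix.mul_inv_rev]
  have hTδinvnorm : ‖Tδ⁻¹‖ ≤ 2 * C := by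
    rw [hTδinv]
    calc ‖B * T⁻¹‖ ≤ ‖B‖ * ‖T⁻¹‖ := Matrix.l2_opNorm_mul _ _
      _ ≤ 2 * C := mul_le_mul hBnorm hTinv (norm_nonneg _) (by norm_num)
  have habsT : 0 < ‖T.det‖ := norm_pos_iff.mpr (isUnit_iff_ne_zero.mp hTdet)
  have habsTδ : 0 < ‖Tδ.det‖ := norm_pos_iff.mpr (isUnit_iff_ne_zero.mp hTδdet)
  have hup : ‖Tδ.det‖ ≤ ‖T.det‖ * Real.exp (C * (δ * Qtr)) := by
    have e1 : (1 : Matrix (Fin n) (Fin n) ℂ) - A = 1 + (-T⁻¹) * F := by rw [hA]; noncomm_ring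
    have e2 : ‖(1 - A).det‖ ≤ Real.exp (C * traceNorm F) := by
      rw [e1]
      exact abs_det_one_add_le _ _ _ (by rw [norm_neg]; exact hTinv)
    have e3 : Real.exp (C * traceNorm F) ≤ Real.exp (C * (δ * Qtr)) :=
      Real.exp_le_exp.mpr (mul_le_mul_of_nonneg_left hdiff hC)
    calc ‖Tδ.det‖ = ‖T.det‖ * ‖(1 - A).det‖ := by
          rw [hTδeq, Matrix.det_mul, norm_mul]
      _ ≤ ‖T.det‖ * Real.exp (C * (δ * Qtr)) :=
          mul_le_mul_of_nonneg_left (e2.trans e3) (norm_nonneg _)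
  have hTeq : T = Tδ * (1 + Tδ⁻¹ * F) := by
    have hTδTδ : Tδ * Tδ⁻¹ = 1 := Matrix.mul_nonsing_inv Tδ hTδdet
    rw [Matrix.mul_add, Matrix.mul_one, ← Matrix.mul_assoc, hTδTδ, Matrix.one_mul, hF]
    abel
  have hlow : ‖T.det‖ ≤ ‖Tδ.det‖ * Real.exp (2 * C * (δ * Qtr)) := by
    have e2 : ‖(1 + Tδ⁻¹ * F).det‖ ≤ Real.exp (2 * C * traceNorm F) :=
      abs_det_one_add_le _ _ _ hTδinvnorm
    have e3 : Real.exp (2 * C * traceNorm F) ≤ Real.exp (2 * C * (δ * Qtr)) :=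
      Real.exp_le_exp.mpr (mul_le_mul_of_nonneg_left hdiff (by linarith))
    calc ‖T.det‖ = ‖Tδ.det‖ * ‖(1 + Tδ⁻¹ * F).det‖ := by
          conv_lhs => rw [hTeq]
          rw [Matrix.det_mul, norm_mul]
      _ ≤ ‖Tδ.det‖ * Real.exp (2 * C * (δ * Qtr)) :=
          mul_le_mul_of_nonneg_left (e2.trans e3) (norm_nonneg _)
  have l1 : Real.log (‖Tδ.det‖) ≤ Real.log (‖T.det‖) + C * (δ * Qtr) := by
    have h := Real.log_le_log habsTδ hup
    rwa [Real.log_mul (ne_of_gt habsT) (Real.exp_ne_zero _), Real.log_exp] at h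
  have l2 : Real.log (‖T.det‖) ≤ Real.log (‖Tδ.det‖) + 2 * C * (δ * Qtr) := by
    have h := Real.log_le_log habsT hlow
    rwa [Real.log_mul (ne_of_gt habsTδ) (Real.exp_ne_zero _), Real.log_exp] at h
  rw [abs_le]
  refine ⟨by linarith, by linarith⟩
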